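/- Let f₁,…,f_n be linear functions, none of which is constant or identical, and assume at least one is monotone decreasing. Let σ be an optimal permutation of [n]. Then there exist angles ψ₁∈(0,π) and ψ₂∈(π,2π) such that θ(f_{σ(i)}) ∈ [ψ₁,ψ₂] for every i∈L^σ and θ(f_{σ(i)}) ∈ [ψ₂,ψ₁]_{2π} for every i∈U^σ. -/

import Mathlib

/-- A linear function `x ↦ a*x + b`. -/
structure LinFun where
  a : ℝ
  b : ℝ

namespace LinFun

/-- Evaluation of a linear function. -/
def eval (f : LinFun) (x : ℝ) : ℝ := f.a * x + f.b

/-- Composition: `h.comp g` is the linear function `x ↦ h (g x)`. -/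
def comp (h g : LinFun) : LinFun := ⟨h.a * g.a, h.a * g.b + h.b⟩

/-- The identical linear function `x ↦ x`. -/
def idf : LinFun := ⟨1, 0⟩

/-- `f` is the identical function (equivalently, its vector `(β f, 1 - α f)` is `(0,0)`,
i.e. its angle is `⊥`). -/
def IsId (f : LinFun) : Prop := f = idf

/-- The Euclidean norm of the vector `(β f, 1 - α f)` associated to `f`. -/
noncomputable def vecNorm (f : LinFun) : ℝ := Real.sqrt (f.b ^ 2 + (1 - f.a) ^ 2)

/-- The polar angle in `[0, 2π)` of the vector `(β f, 1 - α f)` associated to `f`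
(meaningful only when `f` is not identical). -/
noncomputable def theta (f : LinFun) : ℝ :=
  if 0 ≤ Complex.arg ⟨f.b, 1 - f.a⟩ then Complex.arg ⟨f.b, 1 - f.a⟩
  else Complex.arg ⟨f.b, 1 - f.a⟩ + 2 * Real.pi

end LinFun

/-- Congruence of angles modulo `2π`: `x ≡_{2π} y`. -/
def Cong (x y : ℝ) : Prop := ∃ k : ℤ, x - y = 2 * Real.pi * k

/-- The set `[t1, t2]_{2π}`. -/
def Icc2pi (t1 t2 : ℝ) : Set ℝ :=
  {θ | ∃ l1 l2 : ℝ, Cong l1 t1 ∧ Cong l2 t2 ∧ 0 ≤ l2 - l1 ∧ l2 - l1 < 2 * Real.pi ∧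
    θ ∈ Set.Icc l1 l2}

/-- The set `(t1, t2)_{2π}`. -/
def Ioo2pi (t1 t2 : ℝ) : Set ℝ :=
  {θ | ∃ l1 l2 : ℝ, Cong l1 t1 ∧ Cong l2 t2 ∧ 0 ≤ l2 - l1 ∧ l2 - l1 < 2 * Real.pi ∧
    θ ∈ Set.Ioo l1 l2}

/-- Composite of a list of linear functions: `compList [g₁, …, g_m] = g_m ∘ ⋯ ∘ g₁`. -/
def compList (L : List LinFun) : LinFun := L.foldl (fun acc g => g.comp acc) LinFun.idf

/-- The list `f_{σ(1)}, …, f_{σ(n)}` (0-indexed positions). -/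
def permList {n : ℕ} (f : Fin n → LinFun) (σ : Equiv.Perm (Fin n)) : List LinFun :=
  List.ofFn fun i => f (σ i)

/-- `f^σ = f_{σ(n)} ∘ ⋯ ∘ f_{σ(1)}`. -/
def permComp {n : ℕ} (f : Fin n → LinFun) (σ : Equiv.Perm (Fin n)) : LinFun :=
  compList (permList f σ)

/-- The composite of the functions at the (0-indexed) positions `a, a+1, …, b` of `σ`:
`f_{σ(b)} ∘ ⋯ ∘ f_{σ(a)}` (in 0-indexed notation). -/
def segComp {n : ℕ} (f : Fin n → LinFun) (σ : Equiv.Perm (Fin n)) (a b : ℕ) : LinFun :=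
  compList (((permList f σ).drop a).take (b + 1 - a))

/-- The composite corresponding to the `k`-shift `σ_k` of `σ`:
`f^{σ_k} = f_{σ(k)} ∘ ⋯ ∘ f_{σ(1)} ∘ f_{σ(n)} ∘ ⋯ ∘ f_{σ(k+1)}` (1-indexed notation). -/
def shiftComp {n : ℕ} (f : Fin n → LinFun) (σ : Equiv.Perm (Fin n)) (k : ℕ) : LinFun :=
  compList ((permList f σ).rotate k)

/-- `σ` is a minimum (optimal) permutation for `f₁, …, f_n`. -/
def IsMinimum {n : ℕ} (f : Fin n → LinFun) (σ : Equiv.Perm (Fin n)) : Prop :=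
  ∀ ρ : Equiv.Perm (Fin n), (permComp f σ).b ≤ (permComp f ρ).b

/-- `μ` belongs to the neighbourhood `N(σ)`: it is obtained from `σ` by swapping two
adjacent blocks of positions, `(l, …, m)` and `(m+1, …, r)` (0-indexed, `l ≤ m < r < n`). -/
def InNbhd {n : ℕ} (σ μ : Equiv.Perm (Fin n)) : Prop :=
  ∃ (l m r : ℕ) (_ : l ≤ m) (_ : m < r) (_ : r < n),
    (∀ i : Fin n, (i.val < l ∨ r < i.val) → μ i = σ i) ∧
    (∀ i : Fin n, ∀ _ : l ≤ i.val, ∀ _ : i.val < l + r - m,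
      μ i = σ ⟨i.val + m + 1 - l, by omega⟩) ∧
    (∀ i : Fin n, ∀ _ : l + r - m ≤ i.val, ∀ _ : i.val ≤ r,
      μ i = σ ⟨i.val + m - r, by omega⟩)

/-- `σ` is locally optimal for `f₁, …, f_n`. -/
def LocallyOptimal {n : ℕ} (f : Fin n → LinFun) (σ : Equiv.Perm (Fin n)) : Prop :=
  ∀ μ : Equiv.Perm (Fin n), InNbhd σ μ → (permComp f σ).b ≤ (permComp f μ).b

/-- `σ` is counterclockwise: ignoring the identical functions, some rotation of the sequence
of angles `θ(f_{σ(1)}), …, θ(f_{σ(n)})` is nondecreasing. -/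
def Counterclockwise {n : ℕ} (f : Fin n → LinFun) (σ : Equiv.Perm (Fin n)) : Prop :=
  ∃ c : ℕ, ∀ i j : Fin n, ¬ (f (σ i)).IsId → ¬ (f (σ j)).IsId →
    ((c ≤ i.val ∧ i ≤ j) ∨ (i ≤ j ∧ j.val < c) ∨ (c ≤ i.val ∧ j.val < c)) →
    (f (σ i)).theta ≤ (f (σ j)).theta

/-- `f₁, …, f_n` are colinear: all vectors lie on one line through the origin. -/
def Colinear {n : ℕ} (f : Fin n → LinFun) : Prop :=
  ∃ lam : ℝ, ∀ i : Fin n,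
    (f i).IsId ∨ Cong ((f i).theta) lam ∨ Cong ((f i).theta) (lam + Real.pi)

/-- `f₁, …, f_n` are potentially identical: some counterclockwise permutation composes
to the identical function. -/
def PotentiallyIdentical {n : ℕ} (f : Fin n → LinFun) : Prop :=
  ∃ σ : Equiv.Perm (Fin n), Counterclockwise f σ ∧ (permComp f σ).IsId

/-- The ε-perturbation `f^{(ε)}` of a linear function. -/
noncomputable def epsPert (f : LinFun) (ε : ℝ) : LinFun := if f.a = 0 then ⟨ε, f.b⟩ else f


namespace S18
open LinFun

/-- cross product of the vectors of two linear functions -/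
def cr (g h : LinFun) : ℝ := g.b * (1 - h.a) - h.b * (1 - g.a)

lemma comp_idf (x : LinFun) : x.comp idf = x := by
  cases x with | mk a b => simp [comp, idf]

lemma foldl_comp (B : List LinFun) (x : LinFun) :
    B.foldl (fun acc g => g.comp acc) x = (compList B).comp x := by
  induction B generalizing x with
  | nil => simp [compList, comp, idf, List.foldl]
  | cons b B ih =>
      show B.foldl _ (b.comp x) = _
      rw [ih (b.comp x)]
      have h2 : compList (b :: B) = (compList B).comp b := by
        show (b :: B).foldl _ idf = _
        show B.foldl _ (b.comp idf) = _
        rw [ih (b.comp idf), comp_idf]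
      rw [h2]
      cases x; cases b; simp [comp]; constructor <;> ring

lemma compList_cons (x : LinFun) (L : List LinFun) :
    compList (x :: L) = (compList L).comp x := by
  show L.foldl _ (x.comp idf) = _
  rw [foldl_comp, comp_idf]

lemma compList_append (A B : List LinFun) :
    compList (A ++ B) = (compList B).comp (compList A) := by
  show (A ++ B).foldl _ idf = _
  rw [List.foldl_append, foldl_comp]
  rfl

lemma compList_singleton (x : LinFun) : compList [x] = x := by
  rw [compList_cons]; show (idf).comp x = x
  cases x; simp [comp, idf]

/-- slope of compList: sign via count of negatives -/
lemma compList_a_sign (L : List LinFun) (h0 : ∀ x ∈ L, x.a ≠ 0) :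
    (0 < (compList L).a ↔ Even (L.countP (fun x => decide (x.a < 0)))) ∧ (compList L).a ≠ 0 := by
  induction L with
  | nil => simp [compList, idf]
  | cons x L ih =>
      have hx : x.a ≠ 0 := h0 x (by simp)
      obtain ⟨ih1, ih2⟩ := ih (fun y hy => h0 y (by simp [hy]))
      rw [compList_cons]
      constructor
      · simp only [List.countP_cons, decide_eq_true_eq]
        have hA := ih2.lt_or_gt
        rcases lt_trichotomy x.a 0 with hlt | he | hgt
        · rw [if_pos hlt, Nat.even_add_one]
          show 0 < (compList L).a * x.a ↔ _
          constructor
          · intro hpos hev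
            have := ih1.mpr hev
            nlinarith
          · intro he
            have hAneg : (compList L).a < 0 := by
              rcases hA with h | h
              · exact h
              · exact absurd (ih1.mp h) he
            nlinarith
        · exact absurd he hx
        · rw [if_neg (not_lt.mpr hgt.le), add_zero]
          show 0 < (compList L).a * x.a ↔ _
          rw [← ih1]
          constructor
          · intro hpos; nlinarith
          · intro hpos; positivity
      · show (compList L).a * x.a ≠ 0
        exact mul_ne_zero ih2 hx

lemma exists_perm_of_list {n : ℕ} (J' : List (Fin n)) (hnd : J'.Nodup)
    (hlen : J'.length = n) (f : Fin n → LinFun) :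
    ∃ μ : Equiv.Perm (Fin n), permList f μ = J'.map f := by
  have hinj : Function.Injective (fun i : Fin n => J'.get (Fin.cast hlen.symm i)) := by
    intro i j hij
    have := (List.nodup_iff_injective_get.mp hnd) hij
    have : (Fin.cast hlen.symm i : Fin J'.length).val = (Fin.cast hlen.symm j).val := by
      rw [this]
    exact Fin.ext this
  obtain ⟨μ, hμ⟩ : ∃ μ : Equiv.Perm (Fin n), ∀ i, μ i = J'.get (Fin.cast hlen.symm i) :=
    ⟨Equiv.ofBijective _ (Finite.injective_iff_bijective.mp hinj), fun i => rfl⟩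
  refine ⟨μ, ?_⟩
  have h1 : List.ofFn (fun i => μ i) = J' := by
    apply List.ext_getElem (by simp [hlen])
    intro t h1 h2
    simp only [List.getElem_ofFn]
    rw [hμ]
    simp [List.get_eq_getElem]
  show List.ofFn (fun i => f (μ i)) = _
  calc List.ofFn (fun i => f (μ i)) = (List.ofFn fun i => μ i).map f := by
        rw [List.map_ofFn]; rfl
    _ = J'.map f := by rw [h1]

lemma perm_eq_ofFn {n : ℕ} (f : Fin n → LinFun) (σ : Equiv.Perm (Fin n)) :
    permList f σ = (List.ofFn (fun i => σ i)).map f := by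
  rw [List.map_ofFn]; rfl

/-- Key exchange inequality: swapping two adjacent blocks at optimum. -/
lemma key_swap {n : ℕ} (f : Fin n → LinFun) (σ : Equiv.Perm (Fin n))
    (hopt : IsMinimum f σ) (Jp Jx Jy Jr : List (Fin n))
    (hJ : List.ofFn (fun i => σ i) = Jp ++ (Jx ++ (Jy ++ Jr))) :
    0 ≤ (compList (Jr.map f)).a * cr (compList (Jx.map f)) (compList (Jy.map f)) := by
  set J' : List (Fin n) := Jp ++ (Jy ++ (Jx ++ Jr)) with hJ'
  have hJnd : (List.ofFn (fun i => σ i)).Nodup :=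
    List.nodup_ofFn.mpr (fun i j h => σ.injective h)
  have hnd : J'.Nodup := by
    have : (List.ofFn (fun i => σ i)).Perm J' := by
      rw [hJ, hJ']
      refine List.Perm.append_left Jp ?_
      rw [← List.append_assoc, ← List.append_assoc]
      exact List.Perm.append_right Jr List.perm_append_comm
    exact this.nodup hJnd
  have hlen : J'.length = n := by
    have h1 : (List.ofFn (fun i => σ i)).length = n := by simp
    have h2 : (List.ofFn (fun i => σ i)).length = J'.length := by
      rw [hJ, hJ']; simp; omega
    omega
  obtain ⟨μ, hμ⟩ := exists_perm_of_list J' hnd hlen f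
  have hle := hopt μ
  rw [permComp, permComp, hμ, perm_eq_ofFn f σ, hJ, hJ'] at hle
  simp only [List.map_append] at hle
  rw [compList_append, compList_append, compList_append,
      compList_append, compList_append, compList_append] at hle
  set P := compList (Jp.map f)
  set X := compList (Jx.map f)
  set Y := compList (Jy.map f)
  set R := compList (Jr.map f)
  simp only [comp] at hle
  simp only [cr]
  nlinarith [hle]

lemma countP_take_ofFn {n : ℕ} {α : Type*} (g : Fin n → α) (pr : α → Prop) [DecidablePred pr]
    (i : ℕ) (hi : i ≤ n) :
    ((List.ofFn g).take i).countP (fun x => decide (pr x))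
      = (Finset.univ.filter (fun t : Fin n => t.val < i ∧ pr (g t))).card := by
  induction i with
  | zero => simp
  | succ i ih =>
      have hi' : i ≤ n := by omega
      have hlt : i < (List.ofFn g).length := by simp; omega
      rw [List.take_succ, List.countP_append, ih hi']
      have hsome : (List.ofFn g)[i]? = some (g ⟨i, by omega⟩) := by
        rw [List.getElem?_eq_getElem hlt, List.getElem_ofFn]
      rw [hsome]
      have hcnt : (some (g ⟨i, by omega⟩)).toList.countP (fun x => decide (pr x))
          = if pr (g ⟨i, by omega⟩) then 1 else 0 := by
        simp [List.countP_cons, Option.toList]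
      rw [hcnt]
      rw [Finset.card_filter, Finset.card_filter]
      have hsplit : ∀ t : Fin n,
          (if t.val < i + 1 ∧ pr (g t) then 1 else 0)
          = (if t.val < i ∧ pr (g t) then 1 else 0)
            + (if t = ⟨i, by omega⟩ ∧ pr (g t) then 1 else 0) := by
        intro t
        by_cases h1 : pr (g t)
        · by_cases h2 : t.val < i
          · have : ¬ t = ⟨i, by omega⟩ := by
              intro h; rw [h] at h2; simp at h2
            simp [h1, h2, this, Nat.lt_succ_of_lt h2]
          · by_cases h3 : t = ⟨i, by omega⟩
            · have : t.val < i + 1 := by rw [h3]; simp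
              simp [h1, h2, h3, this]
            · have : ¬ t.val < i + 1 := by
                intro h
                exact h3 (Fin.ext (by simp only [Fin.val_mk]; omega))
              simp [h1, h2, h3, this]
        · simp [h1]
      rw [Finset.sum_congr rfl (fun t _ => hsplit t), Finset.sum_add_distrib]
      congr 1
      by_cases h1 : pr (g ⟨i, by omega⟩)
      · rw [if_pos h1]
        rw [show (fun t : Fin n => if t = ⟨i, by omega⟩ ∧ pr (g t) then (1:ℕ) else 0)
            = (fun t : Fin n => if t = ⟨i, by omega⟩ then 1 else 0) from ?_]
        · simp
        · funext t
          by_cases h : t = ⟨i, by omega⟩ <;> simp [h, h1]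
      · rw [if_neg h1]
        rw [show (fun t : Fin n => if t = ⟨i, by omega⟩ ∧ pr (g t) then (1:ℕ) else 0)
            = (fun _ : Fin n => 0) from ?_]
        · simp
        · funext t
          by_cases h : t = ⟨i, by omega⟩
          · simp [h]; intro hh; exact absurd hh h1
          · simp [h]

lemma last_split {α : Type*} (p : α → Bool) :
    ∀ (M : List α), M.countP p ≠ 0 →
      ∃ M1 d M2, M = M1 ++ d :: M2 ∧ p d = true ∧ M2.countP p = 0 := by
  intro M
  induction M with
  | nil => simp
  | cons x M ih =>
      intro h
      by_cases hM : M.countP p = 0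
      · have hx : p x = true := by
          rw [List.countP_cons, hM] at h
          by_contra hc
          simp [hc] at h
        exact ⟨[], x, M, rfl, hx, hM⟩
      · obtain ⟨M1, d, M2, h1, h2, h3⟩ := ih hM
        exact ⟨x :: M1, d, M2, by rw [h1]; rfl, h2, h3⟩

lemma R1 {xg yg xh yh u v ah : ℝ} (hyg : 0 < yg) (hyh : 0 < yh) (hah : 0 < ah) (hv : 0 < v)
    (hc : 0 < xg * yh - xh * yg)
    (H3 : ah * (xg * v - u * yg) + (xg * yh - xh * yg) ≤ 0)
    (H4 : u * yh - xh * v ≤ 0) : False := by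
  nlinarith [mul_le_mul_of_nonneg_left H3 hyh.le,
    mul_le_mul_of_nonneg_left H4 (mul_nonneg hah.le hyg.le),
    mul_pos (mul_pos hah hv) hc, mul_pos hyh hc]

lemma R2 {xg yg xh yh u v ag : ℝ} (hyg : 0 < yg) (hyh : 0 < yh) (hag : 0 < ag) (hv : 0 < v)
    (hc : 0 < xg * yh - xh * yg)
    (H3 : 0 ≤ ag * (xh * v - u * yh) - (xg * yh - xh * yg))
    (H4 : 0 ≤ u * yg - xg * v) : False := by
  nlinarith [mul_le_mul_of_nonneg_left H3 hyg.le,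
    mul_le_mul_of_nonneg_left H4 (mul_nonneg hag.le hyh.le),
    mul_pos (mul_pos hag hv) hc, mul_pos hyg hc]

lemma R3 {xg yg xh yh u v : ℝ} (hyg : yg < 0) (hyh : yh < 0) (hv : 0 < v)
    (hc : xg * yh - xh * yg < 0)
    (H2 : xg * v - u * yg ≤ 0)
    (H4 : u * yh - xh * v ≤ 0) : False := by
  nlinarith [mul_nonneg (neg_nonneg.mpr H2) (neg_nonneg.mpr hyh.le),
    mul_nonneg (neg_nonneg.mpr H4) (neg_nonneg.mpr hyg.le),
    mul_neg_of_pos_of_neg hv hc]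

lemma R4 {xg yg xh yh u v : ℝ} (hyg : yg < 0) (hyh : yh < 0) (hv : 0 < v)
    (hc : xg * yh - xh * yg < 0)
    (H2 : 0 ≤ xh * v - u * yh)
    (H4 : 0 ≤ u * yg - xg * v) : False := by
  nlinarith [mul_nonneg H2 (neg_nonneg.mpr hyg.le),
    mul_nonneg H4 (neg_nonneg.mpr hyh.le),
    mul_neg_of_pos_of_neg hv hc]

section ThetaLemmas
open Real



noncomputable def zf (f : LinFun) : ℂ := ⟨f.b, 1 - f.a⟩

lemma zf_re (f : LinFun) : (zf f).re = f.b := rfl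
lemma zf_im (f : LinFun) : (zf f).im = 1 - f.a := rfl

lemma theta_def (f : LinFun) : f.theta =
    if 0 ≤ (zf f).arg then (zf f).arg else (zf f).arg + 2 * π := rfl

lemma zf_ne_zero {f : LinFun} (h : ¬ f.IsId) : zf f ≠ 0 := by
  intro hz
  apply h
  have hre : f.b = 0 := by rw [← zf_re f, hz]; rfl
  have him : 1 - f.a = 0 := by rw [← zf_im f, hz]; rfl
  cases f with | mk a b =>
    simp at hre him
    show (⟨a, b⟩ : LinFun) = idf
    rw [idf, hre]
    congr 1
    linarith

lemma theta_nonneg (f : LinFun) : 0 ≤ f.theta := by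
  rw [theta_def]
  split
  · assumption
  · nlinarith [Complex.neg_pi_lt_arg (zf f), Real.pi_pos]

lemma theta_lt_two_pi (f : LinFun) : f.theta < 2 * π := by
  rw [theta_def]
  split
  · nlinarith [Complex.arg_le_pi (zf f), Real.pi_pos]
  · nlinarith [Complex.arg_le_pi (zf f), Real.pi_pos]

lemma theta_upper {f : LinFun} (h : 0 < 1 - f.a) :
    f.theta = (zf f).arg ∧ f.theta ∈ Set.Ioo 0 π := by
  have him : 0 < (zf f).im := h
  have h1 : 0 ≤ (zf f).arg := Complex.arg_nonneg_iff.mpr him.le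
  have heq : f.theta = (zf f).arg := by rw [theta_def, if_pos h1]
  have h2 : (zf f).arg ≠ 0 := by
    intro hc
    have := (Complex.arg_eq_zero_iff.mp hc).2
    rw [zf_im] at this; linarith
  have h3 : (zf f).arg ≠ π := by
    intro hc
    have := (Complex.arg_eq_pi_iff.mp hc).2
    rw [zf_im] at this; linarith
  exact ⟨heq, by
    rw [heq]
    exact ⟨lt_of_le_of_ne h1 (Ne.symm h2), lt_of_le_of_ne (Complex.arg_le_pi _) h3⟩⟩

lemma theta_lower {f : LinFun} (h : 1 - f.a < 0) :
    f.theta = (zf f).arg + 2 * π ∧ f.theta ∈ Set.Ioo π (2 * π) := by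
  have harg : (zf f).arg < 0 := Complex.arg_neg_iff.mpr h
  have heq : f.theta = (zf f).arg + 2 * π := by rw [theta_def, if_neg (not_le.mpr harg)]
  refine ⟨heq, ?_⟩
  rw [heq]
  constructor
  · nlinarith [Complex.neg_pi_lt_arg (zf f)]
  · nlinarith [harg]

lemma theta_eq_zero_iff {f : LinFun} (h : ¬ f.IsId) :
    f.theta = 0 ↔ (1 - f.a = 0 ∧ 0 < f.b) := by
  constructor
  · intro ht
    have harg : (zf f).arg = 0 := by
      rw [theta_def] at ht
      split at ht
      · exact ht
      · nlinarith [Complex.neg_pi_lt_arg (zf f), Real.pi_pos]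
    obtain ⟨h1, h2⟩ := Complex.arg_eq_zero_iff.mp harg
    rw [zf_re] at h1; rw [zf_im] at h2
    refine ⟨h2, ?_⟩
    rcases lt_or_eq_of_le h1 with hlt | heq
    · exact hlt
    · exact absurd (by rw [Complex.ext_iff, zf_re, zf_im]; exact ⟨heq.symm, h2⟩) (zf_ne_zero h)
  · rintro ⟨h1, h2⟩
    have : (zf f).arg = 0 := by
      apply Complex.arg_eq_zero_iff.mpr
      rw [zf_re, zf_im]
      exact ⟨h2.le, h1⟩
    rw [theta_def, this]
    simp

lemma theta_eq_pi_iff {f : LinFun} :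
    f.theta = π ↔ (1 - f.a = 0 ∧ f.b < 0) := by
  constructor
  · intro ht
    have harg : (zf f).arg = π := by
      rw [theta_def] at ht
      split at ht
      · exact ht
      · exfalso; linarith [Complex.neg_pi_lt_arg (zf f)]
    obtain ⟨h1, h2⟩ := Complex.arg_eq_pi_iff.mp harg
    rw [zf_re] at h1; rw [zf_im] at h2
    exact ⟨h2, h1⟩
  · rintro ⟨h1, h2⟩
    have : (zf f).arg = π := by
      apply Complex.arg_eq_pi_iff.mpr
      rw [zf_re, zf_im]
      exact ⟨h2, h1⟩
    rw [theta_def, this]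
    rw [if_pos Real.pi_pos.le]

lemma cr_eq_sin {g h : LinFun} (hg : zf g ≠ 0) (hh : zf h ≠ 0) :
    cr g h = ‖zf g‖ * ‖zf h‖ * Real.sin ((zf h).arg - (zf g).arg) := by
  have hag : ‖zf g‖ ≠ 0 := by simpa using hg
  have hah : ‖zf h‖ ≠ 0 := by simpa using hh
  have hgre : (zf g).re = ‖zf g‖ * Real.cos ((zf g).arg) := by
    rw [Complex.cos_arg hg]; field_simp
  have hgim : (zf g).im = ‖zf g‖ * Real.sin ((zf g).arg) := by
    rw [Complex.sin_arg]; field_simp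
  have hhre : (zf h).re = ‖zf h‖ * Real.cos ((zf h).arg) := by
    rw [Complex.cos_arg hh]; field_simp
  have hhim : (zf h).im = ‖zf h‖ * Real.sin ((zf h).arg) := by
    rw [Complex.sin_arg]; field_simp
  have hcr : cr g h = (zf g).re * (zf h).im - (zf h).re * (zf g).im := by
    rw [zf_re, zf_im, zf_re, zf_im, cr]
  rw [hcr, hgre, hgim, hhre, hhim, Real.sin_sub]
  ring

/-- both in open upper half plane with θ g < θ h gives positive cross -/
lemma cr_pos_upper {g h : LinFun} (hg : ¬ g.IsId) (hh : ¬ h.IsId)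
    (hga : 0 < 1 - g.a) (hha : 0 < 1 - h.a) (hlt : g.theta < h.theta) : 0 < cr g h := by
  obtain ⟨hgeq, hgm⟩ := theta_upper hga
  obtain ⟨hheq, hhm⟩ := theta_upper hha
  rw [cr_eq_sin (zf_ne_zero hg) (zf_ne_zero hh)]
  have h1 : 0 < Real.sin ((zf h).arg - (zf g).arg) := by
    apply Real.sin_pos_of_pos_of_lt_pi
    · rw [← hgeq, ← hheq]; linarith
    · rw [← hgeq, ← hheq]
      obtain ⟨a1, a2⟩ := hgm; obtain ⟨b1, b2⟩ := hhm
      linarith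
  have h2 : 0 < ‖zf g‖ := by
    simpa [norm_pos_iff] using zf_ne_zero hg
  have h3 : 0 < ‖zf h‖ := by
    simpa [norm_pos_iff] using zf_ne_zero hh
  positivity

/-- both in open lower half plane with θ h < θ g gives negative cross -/
lemma cr_neg_lower {g h : LinFun} (hg : ¬ g.IsId) (hh : ¬ h.IsId)
    (hga : 1 - g.a < 0) (hha : 1 - h.a < 0) (hlt : h.theta < g.theta) : cr g h < 0 := by
  obtain ⟨hgeq, hgm⟩ := theta_lower hga
  obtain ⟨hheq, hhm⟩ := theta_lower hha
  rw [cr_eq_sin (zf_ne_zero hg) (zf_ne_zero hh)]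
  have h1 : Real.sin ((zf h).arg - (zf g).arg) < 0 := by
    rw [show (zf h).arg - (zf g).arg = -((zf g).arg - (zf h).arg) by ring, Real.sin_neg,
        neg_lt, neg_zero]
    apply Real.sin_pos_of_pos_of_lt_pi
    · have : (zf g).arg = g.theta - 2*π := by rw [hgeq]; ring
      have h2 : (zf h).arg = h.theta - 2*π := by rw [hheq]; ring
      rw [this, h2]; linarith
    · obtain ⟨a1, a2⟩ := hgm; obtain ⟨b1, b2⟩ := hhm
      have : (zf g).arg = g.theta - 2*π := by rw [hgeq]; ring
      have h2 : (zf h).arg = h.theta - 2*π := by rw [hheq]; ring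
      rw [this, h2]; linarith
  have h2 : 0 < ‖zf g‖ := by
    simpa [norm_pos_iff] using zf_ne_zero hg
  have h3 : 0 < ‖zf h‖ := by
    simpa [norm_pos_iff] using zf_ne_zero hh
  exact mul_neg_of_pos_of_neg (mul_pos h2 h3) h1

open Real in
lemma upper_of_theta {f : LinFun} (hnid : ¬ f.IsId) (h : f.theta ∈ Set.Ioo 0 π) :
    0 < 1 - f.a := by
  rcases lt_trichotomy (1 - f.a) 0 with hlt | heq | hgt
  · obtain ⟨_, hm⟩ := theta_lower hlt
    exfalso
    have := hm.1
    have := h.2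
    linarith [Real.pi_pos]
  · exfalso
    rcases lt_trichotomy f.b 0 with hb | hb | hb
    · have := theta_eq_pi_iff.mpr ⟨heq, hb⟩
      rw [this] at h
      exact absurd h.2 (lt_irrefl _)
    · exact zf_ne_zero hnid (by rw [Complex.ext_iff, zf_re, zf_im]; exact ⟨hb, heq⟩)
    · have := (theta_eq_zero_iff hnid).mpr ⟨heq, hb⟩
      rw [this] at h
      exact absurd h.1 (lt_irrefl _)
  · exact hgt

open Real in
lemma lower_of_theta {f : LinFun} (hnid : ¬ f.IsId) (h : f.theta ∈ Set.Ioo π (2*π)) :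
    1 - f.a < 0 := by
  rcases lt_trichotomy (1 - f.a) 0 with hlt | heq | hgt
  · exact hlt
  · exfalso
    rcases lt_trichotomy f.b 0 with hb | hb | hb
    · have := theta_eq_pi_iff.mpr ⟨heq, hb⟩
      rw [this] at h
      exact absurd h.1 (lt_irrefl _)
    · exact zf_ne_zero hnid (by rw [Complex.ext_iff, zf_re, zf_im]; exact ⟨hb, heq⟩)
    · have := (theta_eq_zero_iff hnid).mpr ⟨heq, hb⟩
      rw [this] at h
      have := h.1
      linarith [Real.pi_pos]
  · obtain ⟨_, hm⟩ := theta_upper hgt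
    exfalso
    have := hm.2
    have := h.1
    linarith

end ThetaLemmas

lemma nonpos_of_mul_nn {a b : ℝ} (h : 0 ≤ a * b) (ha : a < 0) : b ≤ 0 := by nlinarith
lemma nonneg_of_mul_nn {a b : ℝ} (h : 0 ≤ a * b) (ha : 0 < a) : 0 ≤ b := by nlinarith

section Main
variable {n : ℕ} (f : Fin n → LinFun) (σ : Equiv.Perm (Fin n))

/-- decreasing-position predicate -/
noncomputable def pt : Fin n → Bool := fun j => decide ((f j).a < 0)
/-- the list of positions -/
def Jl : List (Fin n) := List.ofFn (fun i => σ i)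
/-- total number of decreasing functions -/
noncomputable def kc : ℕ := (Jl σ).countP (pt f)
/-- number of decreasing positions before `i` -/
noncomputable def mc (i : Fin n) : ℕ := ((Jl σ).take i.val).countP (pt f)

lemma Jl_len : (Jl σ).length = n := by simp [Jl]

lemma map_ne (hnconst : ∀ i, (f i).a ≠ 0) (M : List (Fin n)) :
    ∀ x ∈ M.map f, x.a ≠ 0 := by
  intro x hx
  obtain ⟨j, _, rfl⟩ := List.mem_map.mp hx
  exact hnconst j

lemma countP_map_pt (M : List (Fin n)) :
    (M.map f).countP (fun x => decide (x.a < 0)) = M.countP (pt f) := by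
  rw [List.countP_map]; rfl

lemma sign_neg (hnconst : ∀ i, (f i).a ≠ 0) (M : List (Fin n))
    (h : ¬ Even (M.countP (pt f))) : (compList (M.map f)).a < 0 := by
  obtain ⟨h1, h2⟩ := compList_a_sign (M.map f) (map_ne f hnconst M)
  rcases h2.lt_or_gt with hl | hg
  · exact hl
  · exact absurd (by rw [← countP_map_pt]; exact h1.mp hg) h

lemma sign_pos (hnconst : ∀ i, (f i).a ≠ 0) (M : List (Fin n))
    (h : Even (M.countP (pt f))) : 0 < (compList (M.map f)).a := by
  obtain ⟨h1, h2⟩ := compList_a_sign (M.map f) (map_ne f hnconst M)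
  exact h1.mpr (by rw [countP_map_pt]; exact h)

lemma drop_cons (i : Fin n) :
    (Jl σ).drop i.val = σ i :: (Jl σ).drop (i.val + 1) := by
  have hget : (Jl σ)[i.val]'(by rw [Jl_len]; exact i.isLt) = σ i := by
    simp [Jl]
  rw [List.drop_eq_getElem_cons (by rw [Jl_len]; exact i.isLt), hget]

lemma decomp_at (i : Fin n) :
    Jl σ = (Jl σ).take i.val ++ σ i :: (Jl σ).drop (i.val + 1) := by
  conv_lhs => rw [← List.take_append_drop i.val (Jl σ)]
  rw [drop_cons]

lemma kc_split (i : Fin n) :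
    kc f σ = mc f σ i + ((Jl σ).drop (i.val + 1)).countP (pt f)
      + (if pt f (σ i) then 1 else 0) := by
  rw [kc]
  conv_lhs => rw [decomp_at σ i]
  rw [List.countP_append, List.countP_cons, mc]
  omega

/-- exchange inequalities for an L-position before a U-position -/
lemma pair_ineqs (hopt : IsMinimum f σ) (hnconst : ∀ i, (f i).a ≠ 0)
    (p q : Fin n) (hpq : p.val < q.val)
    (hap : 0 < (f (σ p)).a) (haq : 0 < (f (σ q)).a)
    (hEp : Even (kc f σ - mc f σ p)) (hEq : ¬ Even (kc f σ - mc f σ q)) :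
    ∃ u v : ℝ, 0 < v ∧
      (f (σ p)).b * v - u * (1 - (f (σ p)).a) ≤ 0 ∧
      (f (σ q)).a * ((f (σ p)).b * v - u * (1 - (f (σ p)).a)) + cr (f (σ p)) (f (σ q)) ≤ 0 ∧
      u * (1 - (f (σ q)).a) - (f (σ q)).b * v ≤ 0 := by
  set mid : List (Fin n) := ((Jl σ).drop (p.val + 1)).take (q.val - (p.val + 1)) with hmid
  have hptp : pt f (σ p) = false := by simp [pt, not_lt.mpr hap.le]
  have hptq : pt f (σ q) = false := by simp [pt, not_lt.mpr haq.le]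
  have hJd : Jl σ = ((Jl σ).take p.val ++ σ p :: mid) ++ σ q :: (Jl σ).drop (q.val + 1) := by
    have h3 : ((Jl σ).drop (p.val + 1)).drop (q.val - (p.val + 1)) = (Jl σ).drop q.val := by
      rw [List.drop_drop]; congr 1; omega
    calc Jl σ = (Jl σ).take p.val ++ σ p :: (Jl σ).drop (p.val + 1) := decomp_at σ p
      _ = (Jl σ).take p.val ++ σ p ::
            (mid ++ ((Jl σ).drop (p.val + 1)).drop (q.val - (p.val + 1))) := by
          rw [List.take_append_drop]
      _ = (Jl σ).take p.val ++ σ p :: (mid ++ (σ q :: (Jl σ).drop (q.val + 1))) := by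
          rw [h3, drop_cons]
      _ = ((Jl σ).take p.val ++ σ p :: mid) ++ σ q :: (Jl σ).drop (q.val + 1) := by
          simp [List.append_assoc]
  have hmidlen : mid.length = q.val - (p.val + 1) := by
    rw [hmid, List.length_take, List.length_drop, Jl_len]
    have := q.isLt
    omega
  have htakeq : (Jl σ).take q.val = (Jl σ).take p.val ++ σ p :: mid := by
    have hlen1 : ((Jl σ).take p.val ++ σ p :: mid).length = q.val := by
      rw [List.length_append, List.length_take, Jl_len, List.length_cons, hmidlen]
      have := p.isLt
      omega
    conv_lhs => rw [hJd]
    exact List.take_left' hlen1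
  -- counting
  set dq := ((Jl σ).drop (q.val + 1)).countP (pt f) with hdq
  set cm := mid.countP (pt f) with hcm
  have hkq : kc f σ = mc f σ q + dq := by
    have := kc_split f σ q
    rw [hptq] at this
    simp at this
    omega
  have hmq : mc f σ q = mc f σ p + cm := by
    rw [mc, htakeq, List.countP_append, List.countP_cons, hptp, mc]
    simp
    rfl
  have hdqe : kc f σ - mc f σ q = dq := by omega
  have hEdq : ¬ Even dq := by rw [← hdqe]; exact hEq
  have hEcm : ¬ Even cm := by
    have h1 : kc f σ - mc f σ p = cm + dq := by omega
    rw [h1] at hEp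
    rw [Nat.even_add] at hEp
    intro h
    exact hEdq (hEp.mp h)
  set B := compList (mid.map f) with hB
  set R := compList (((Jl σ).drop (q.val + 1)).map f) with hR
  have hBa : B.a < 0 := sign_neg f hnconst mid hEcm
  have hRa : R.a < 0 := sign_neg f hnconst _ hEdq
  refine ⟨B.b, 1 - B.a, by linarith, ?_, ?_, ?_⟩
  · -- (ii)
    have e2 := key_swap f σ hopt ((Jl σ).take p.val) [σ p] mid (σ q :: (Jl σ).drop (q.val + 1))
      (by show Jl σ = _
          conv_lhs => rw [hJd]
          simp [List.append_assoc])
    rw [show ([σ p].map f) = [f (σ p)] from rfl, compList_singleton] at e2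
    have hRq : (compList ((σ q :: (Jl σ).drop (q.val + 1)).map f)).a < 0 := by
      rw [show ((σ q :: (Jl σ).drop (q.val + 1)).map f) = f (σ q) :: ((Jl σ).drop (q.val+1)).map f
          from rfl, compList_cons]
      show R.a * (f (σ q)).a < 0
      exact mul_neg_of_neg_of_pos hRa haq
    have := nonpos_of_mul_nn e2 hRq
    rw [cr] at this
    linarith
  · -- (iii)
    have e3 := key_swap f σ hopt ((Jl σ).take p.val) [σ p] (mid ++ [σ q]) ((Jl σ).drop (q.val + 1))
      (by show Jl σ = _
          conv_lhs => rw [hJd]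
          simp [List.append_assoc])
    rw [show ([σ p].map f) = [f (σ p)] from rfl, compList_singleton] at e3
    rw [List.map_append, compList_append,
        show ([σ q].map f) = [f (σ q)] from rfl, compList_singleton] at e3
    have := nonpos_of_mul_nn e3 hRa
    have hexp : cr (f (σ p)) ((f (σ q)).comp B)
        = (f (σ q)).a * ((f (σ p)).b * (1 - B.a) - B.b * (1 - (f (σ p)).a))
          + cr (f (σ p)) (f (σ q)) := by
      simp [cr, LinFun.comp]
      ring
    rw [hexp] at this
    linarith
  · -- (iv)
    have e4 := key_swap f σ hopt ((Jl σ).take p.val ++ [σ p]) mid [σ q] ((Jl σ).drop (q.val + 1))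
      (by show Jl σ = _
          conv_lhs => rw [hJd]
          simp [List.append_assoc])
    rw [show ([σ q].map f) = [f (σ q)] from rfl, compList_singleton] at e4
    have := nonpos_of_mul_nn e4 hRa
    rw [cr] at this
    linarith

/-- exchange inequalities for a U-position before an L-position -/
lemma pair_ineqs' (hopt : IsMinimum f σ) (hnconst : ∀ i, (f i).a ≠ 0)
    (p q : Fin n) (hpq : p.val < q.val)
    (hap : 0 < (f (σ p)).a) (haq : 0 < (f (σ q)).a)
    (hEp : ¬ Even (kc f σ - mc f σ p)) (hEq : Even (kc f σ - mc f σ q)) :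
    ∃ u v : ℝ, 0 < v ∧
      0 ≤ (f (σ p)).b * v - u * (1 - (f (σ p)).a) ∧
      0 ≤ (f (σ q)).a * ((f (σ p)).b * v - u * (1 - (f (σ p)).a)) + cr (f (σ p)) (f (σ q)) ∧
      0 ≤ u * (1 - (f (σ q)).a) - (f (σ q)).b * v := by
  set mid : List (Fin n) := ((Jl σ).drop (p.val + 1)).take (q.val - (p.val + 1)) with hmid
  have hptp : pt f (σ p) = false := by simp [pt, not_lt.mpr hap.le]
  have hptq : pt f (σ q) = false := by simp [pt, not_lt.mpr haq.le]
  have hJd : Jl σ = ((Jl σ).take p.val ++ σ p :: mid) ++ σ q :: (Jl σ).drop (q.val + 1) := by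
    have h3 : ((Jl σ).drop (p.val + 1)).drop (q.val - (p.val + 1)) = (Jl σ).drop q.val := by
      rw [List.drop_drop]; congr 1; omega
    calc Jl σ = (Jl σ).take p.val ++ σ p :: (Jl σ).drop (p.val + 1) := decomp_at σ p
      _ = (Jl σ).take p.val ++ σ p ::
            (mid ++ ((Jl σ).drop (p.val + 1)).drop (q.val - (p.val + 1))) := by
          rw [List.take_append_drop]
      _ = (Jl σ).take p.val ++ σ p :: (mid ++ (σ q :: (Jl σ).drop (q.val + 1))) := by
          rw [h3, drop_cons]
      _ = ((Jl σ).take p.val ++ σ p :: mid) ++ σ q :: (Jl σ).drop (q.val + 1) := by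
          simp [List.append_assoc]
  have hmidlen : mid.length = q.val - (p.val + 1) := by
    rw [hmid, List.length_take, List.length_drop, Jl_len]
    have := q.isLt
    omega
  have htakeq : (Jl σ).take q.val = (Jl σ).take p.val ++ σ p :: mid := by
    have hlen1 : ((Jl σ).take p.val ++ σ p :: mid).length = q.val := by
      rw [List.length_append, List.length_take, Jl_len, List.length_cons, hmidlen]
      have := p.isLt
      omega
    conv_lhs => rw [hJd]
    exact List.take_left' hlen1
  set dq := ((Jl σ).drop (q.val + 1)).countP (pt f) with hdq
  set cm := mid.countP (pt f) with hcm
  have hkq : kc f σ = mc f σ q + dq := by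
    have := kc_split f σ q
    rw [hptq] at this
    simp at this
    omega
  have hmq : mc f σ q = mc f σ p + cm := by
    rw [mc, htakeq, List.countP_append, List.countP_cons, hptp, mc]
    simp
    rfl
  have hdqe : kc f σ - mc f σ q = dq := by omega
  have hEdq : Even dq := by rw [← hdqe]; exact hEq
  have hEcm : ¬ Even cm := by
    have h1 : kc f σ - mc f σ p = cm + dq := by omega
    rw [h1, Nat.even_add] at hEp
    intro h
    exact hEp ⟨fun _ => hEdq, fun _ => h⟩
  set B := compList (mid.map f) with hB
  set R := compList (((Jl σ).drop (q.val + 1)).map f) with hR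
  have hBa : B.a < 0 := sign_neg f hnconst mid hEcm
  have hRa : 0 < R.a := sign_pos f hnconst _ hEdq
  refine ⟨B.b, 1 - B.a, by linarith, ?_, ?_, ?_⟩
  · have e2 := key_swap f σ hopt ((Jl σ).take p.val) [σ p] mid (σ q :: (Jl σ).drop (q.val + 1))
      (by show Jl σ = _
          conv_lhs => rw [hJd]
          simp [List.append_assoc])
    rw [show ([σ p].map f) = [f (σ p)] from rfl, compList_singleton] at e2
    have hRq : 0 < (compList ((σ q :: (Jl σ).drop (q.val + 1)).map f)).a := by
      rw [show ((σ q :: (Jl σ).drop (q.val + 1)).map f) = f (σ q) :: ((Jl σ).drop (q.val+1)).map f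
          from rfl, compList_cons]
      show 0 < R.a * (f (σ q)).a
      exact mul_pos hRa haq
    have := nonneg_of_mul_nn e2 hRq
    rw [cr] at this
    linarith
  · have e3 := key_swap f σ hopt ((Jl σ).take p.val) [σ p] (mid ++ [σ q]) ((Jl σ).drop (q.val + 1))
      (by show Jl σ = _
          conv_lhs => rw [hJd]
          simp [List.append_assoc])
    rw [show ([σ p].map f) = [f (σ p)] from rfl, compList_singleton] at e3
    rw [List.map_append, compList_append,
        show ([σ q].map f) = [f (σ q)] from rfl, compList_singleton] at e3
    have := nonneg_of_mul_nn e3 hRa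
    have hexp : cr (f (σ p)) ((f (σ q)).comp B)
        = (f (σ q)).a * ((f (σ p)).b * (1 - B.a) - B.b * (1 - (f (σ p)).a))
          + cr (f (σ p)) (f (σ q)) := by
      simp [cr, LinFun.comp]
      ring
    rw [hexp] at this
    linarith
  · have e4 := key_swap f σ hopt ((Jl σ).take p.val ++ [σ p]) mid [σ q] ((Jl σ).drop (q.val + 1))
      (by show Jl σ = _
          conv_lhs => rw [hJd]
          simp [List.append_assoc])
    rw [show ([σ q].map f) = [f (σ q)] from rfl, compList_singleton] at e4
    have := nonneg_of_mul_nn e4 hRa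
    rw [cr] at this
    linarith

end Main

section Claims
open Real
variable {n : ℕ} (f : Fin n → LinFun) (σ : Equiv.Perm (Fin n))

lemma CL0 (hopt : IsMinimum f σ) (hnconst : ∀ i, (f i).a ≠ 0)
    (hnid : ∀ i, ¬ (f i).IsId) (hdec : ∃ i, (f i).a < 0) (i : Fin n)
    (hpi : 0 < (f (σ i)).a) (hEi : Even (kc f σ - mc f σ i)) :
    (f (σ i)).theta ≠ 0 := by
  intro h0
  obtain ⟨hy, hb⟩ := (theta_eq_zero_iff (hnid (σ i))).mp h0
  have hpti : pt f (σ i) = false := by simp [pt, not_lt.mpr hpi.le]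
  have hks : kc f σ = mc f σ i + ((Jl σ).drop (i.val + 1)).countP (pt f) := by
    have := kc_split f σ i
    rw [hpti] at this
    simpa using this
  have hkc1 : 0 < kc f σ := by
    obtain ⟨t, ht⟩ := hdec
    apply List.countP_pos_iff.mpr
    refine ⟨t, ?_, by simp [pt, ht]⟩
    rw [Jl]
    exact List.mem_ofFn.mpr ⟨σ.symm t, by simp⟩
  have hEdq : Even (((Jl σ).drop (i.val + 1)).countP (pt f)) := by
    have h' : kc f σ - mc f σ i = ((Jl σ).drop (i.val + 1)).countP (pt f) := by omega
    rwa [h'] at hEi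
  by_cases hdq0 : ((Jl σ).drop (i.val + 1)).countP (pt f) = 0
  · have hmc : ((Jl σ).take i.val).countP (pt f) ≠ 0 := by
      have : mc f σ i ≠ 0 := by omega
      exact this
    obtain ⟨T1, d, T2, hT, hTd, hT2⟩ := last_split (pt f) ((Jl σ).take i.val) hmc
    have hJd2 : Jl σ = T1 ++ ((d :: T2) ++ ([σ i] ++ (Jl σ).drop (i.val + 1))) := by
      conv_lhs => rw [decomp_at σ i]
      rw [hT]
      simp [List.append_assoc]
    have e := key_swap f σ hopt T1 (d :: T2) [σ i] ((Jl σ).drop (i.val + 1))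
      (by show Jl σ = _; exact hJd2)
    rw [show ([σ i].map f) = [f (σ i)] from rfl, compList_singleton] at e
    have hXa : (compList ((d :: T2).map f)).a < 0 := by
      apply sign_neg f hnconst
      rw [List.countP_cons, hT2, hTd]
      simp
    have hRa : 0 < (compList (((Jl σ).drop (i.val + 1)).map f)).a := by
      apply sign_pos f hnconst
      rw [hdq0]
      exact Even.zero
    have hcr := nonneg_of_mul_nn e hRa
    rw [cr] at hcr
    have h1 : 0 < 1 - (compList ((d :: T2).map f)).a := by linarith
    have h2 : (compList ((d :: T2).map f)).b * (1 - (f (σ i)).a) = 0 := by rw [hy]; ring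
    linarith [mul_pos hb h1, h2, hcr]
  · obtain ⟨D1, d, D2, hD, hDd, hD2⟩ := last_split (pt f) ((Jl σ).drop (i.val + 1)) hdq0
    have hJd2 : Jl σ = (Jl σ).take i.val ++ ([σ i] ++ (D1 ++ (d :: D2))) := by
      conv_lhs => rw [decomp_at σ i]
      rw [hD]
      simp [List.append_assoc]
    have e := key_swap f σ hopt ((Jl σ).take i.val) [σ i] D1 (d :: D2)
      (by show Jl σ = _; exact hJd2)
    rw [show ([σ i].map f) = [f (σ i)] from rfl, compList_singleton] at e
    have hRa : (compList ((d :: D2).map f)).a < 0 := by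
      apply sign_neg f hnconst
      rw [List.countP_cons, hD2, hDd]
      simp
    have hcnt : ((Jl σ).drop (i.val + 1)).countP (pt f) = D1.countP (pt f) + 1 := by
      rw [hD, List.countP_append, List.countP_cons, hDd, hD2]
      simp
    have hD1c : ¬ Even (D1.countP (pt f)) := by
      rw [hcnt] at hEdq
      exact Nat.even_add_one.mp hEdq
    have hBa : (compList (D1.map f)).a < 0 := sign_neg f hnconst D1 hD1c
    have hcr := nonpos_of_mul_nn e hRa
    rw [cr] at hcr
    have h1 : 0 < 1 - (compList (D1.map f)).a := by linarith
    have h2 : (compList (D1.map f)).b * (1 - (f (σ i)).a) = 0 := by rw [hy]; ring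
    linarith [mul_pos hb h1, h2, hcr]

lemma CL1 (hopt : IsMinimum f σ) (hnconst : ∀ i, (f i).a ≠ 0) (i : Fin n)
    (hpi : 0 < (f (σ i)).a) (hEi : ¬ Even (kc f σ - mc f σ i)) :
    (f (σ i)).theta ≠ π := by
  intro h0
  obtain ⟨hy, hb⟩ := theta_eq_pi_iff.mp h0
  have hpti : pt f (σ i) = false := by simp [pt, not_lt.mpr hpi.le]
  have hks : kc f σ = mc f σ i + ((Jl σ).drop (i.val + 1)).countP (pt f) := by
    have := kc_split f σ i
    rw [hpti] at this
    simpa using this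
  have hEdq : ¬ Even (((Jl σ).drop (i.val + 1)).countP (pt f)) := by
    have h' : kc f σ - mc f σ i = ((Jl σ).drop (i.val + 1)).countP (pt f) := by omega
    rwa [h'] at hEi
  have hJd2 : Jl σ = (Jl σ).take i.val ++ ([σ i] ++ ((Jl σ).drop (i.val + 1) ++ [])) := by
    conv_lhs => rw [decomp_at σ i]
    simp [List.append_assoc]
  have e := key_swap f σ hopt ((Jl σ).take i.val) [σ i] ((Jl σ).drop (i.val + 1)) []
    (by show Jl σ = _; exact hJd2)
  rw [show ([σ i].map f) = [f (σ i)] from rfl, compList_singleton] at e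
  have e' : 0 ≤ cr (f (σ i)) (compList (((Jl σ).drop (i.val + 1)).map f)) := by
    simpa [compList, LinFun.idf] using e
  have hDa : (compList (((Jl σ).drop (i.val + 1)).map f)).a < 0 :=
    sign_neg f hnconst _ hEdq
  rw [cr] at e'
  have h1 : 0 < 1 - (compList (((Jl σ).drop (i.val + 1)).map f)).a := by linarith
  have h2 : (compList (((Jl σ).drop (i.val + 1)).map f)).b * (1 - (f (σ i)).a) = 0 := by
    rw [hy]; ring
  linarith [mul_neg_of_neg_of_pos hb h1, h2, e']

lemma CL2 (hopt : IsMinimum f σ) (hnconst : ∀ i, (f i).a ≠ 0)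
    (hnid : ∀ i, ¬ (f i).IsId) (hdec : ∃ i, (f i).a < 0) (i j : Fin n)
    (hpi : 0 < (f (σ i)).a) (hEi : Even (kc f σ - mc f σ i))
    (hpj : 0 < (f (σ j)).a) (hEj : ¬ Even (kc f σ - mc f σ j))
    (hj : (f (σ j)).theta ∈ Set.Ioo 0 π) :
    (f (σ j)).theta ≤ (f (σ i)).theta := by
  by_contra hcon
  push_neg at hcon
  have hi0 : (f (σ i)).theta ≠ 0 := CL0 f σ hopt hnconst hnid hdec i hpi hEi
  have hiIoo : (f (σ i)).theta ∈ Set.Ioo 0 π :=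
    ⟨lt_of_le_of_ne (theta_nonneg _) (Ne.symm hi0), lt_trans hcon hj.2⟩
  have ygi : 0 < 1 - (f (σ i)).a := upper_of_theta (hnid (σ i)) hiIoo
  have ygj : 0 < 1 - (f (σ j)).a := upper_of_theta (hnid (σ j)) hj
  have hc : 0 < cr (f (σ i)) (f (σ j)) :=
    cr_pos_upper (hnid (σ i)) (hnid (σ j)) ygi ygj hcon
  rcases lt_trichotomy i.val j.val with hlt | heq | hgt
  · obtain ⟨u, v, hv, _, H3, H4⟩ := pair_ineqs f σ hopt hnconst i j hlt hpi hpj hEi hEj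
    rw [cr] at hc
    exact R1 ygi ygj hpj hv hc H3 H4
  · exact hEj (by rw [show j = i from Fin.ext heq.symm]; exact hEi)
  · obtain ⟨u, v, hv, _, H3, H4⟩ := pair_ineqs' f σ hopt hnconst j i hgt hpj hpi hEj hEi
    have H3' : 0 ≤ (f (σ i)).a * ((f (σ j)).b * v - u * (1 - (f (σ j)).a))
        - ((f (σ i)).b * (1 - (f (σ j)).a) - (f (σ j)).b * (1 - (f (σ i)).a)) := by
      have hcr2 : cr (f (σ j)) (f (σ i))
          = -((f (σ i)).b * (1 - (f (σ j)).a) - (f (σ j)).b * (1 - (f (σ i)).a)) := by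
        rw [cr]; ring
      rw [hcr2] at H3
      linarith
    rw [cr] at hc
    exact R2 ygi ygj hpi hv hc H3' H4

lemma CL3 (hopt : IsMinimum f σ) (hnconst : ∀ i, (f i).a ≠ 0)
    (hnid : ∀ i, ¬ (f i).IsId) (i j : Fin n)
    (hpi : 0 < (f (σ i)).a) (hEi : Even (kc f σ - mc f σ i))
    (hpj : 0 < (f (σ j)).a) (hEj : ¬ Even (kc f σ - mc f σ j))
    (hj : (f (σ j)).theta ∈ Set.Ioo π (2 * π)) :
    (f (σ i)).theta ≤ (f (σ j)).theta := by
  by_contra hcon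
  push_neg at hcon
  have hiIoo : (f (σ i)).theta ∈ Set.Ioo π (2 * π) :=
    ⟨lt_trans hj.1 hcon, theta_lt_two_pi _⟩
  have ygi : 1 - (f (σ i)).a < 0 := lower_of_theta (hnid (σ i)) hiIoo
  have ygj : 1 - (f (σ j)).a < 0 := lower_of_theta (hnid (σ j)) hj
  have hc : cr (f (σ i)) (f (σ j)) < 0 :=
    cr_neg_lower (hnid (σ i)) (hnid (σ j)) ygi ygj hcon
  rcases lt_trichotomy i.val j.val with hlt | heq | hgt
  · obtain ⟨u, v, hv, H2, _, H4⟩ := pair_ineqs f σ hopt hnconst i j hlt hpi hpj hEi hEj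
    rw [cr] at hc
    exact R3 ygi ygj hv hc H2 H4
  · exact hEj (by rw [show j = i from Fin.ext heq.symm]; exact hEi)
  · obtain ⟨u, v, hv, H2, _, H4⟩ := pair_ineqs' f σ hopt hnconst j i hgt hpj hpi hEj hEi
    rw [cr] at hc
    exact R4 ygi ygj hv hc H2 H4

end Claims

section Bridge
variable {n : ℕ} (f : Fin n → LinFun) (σ : Equiv.Perm (Fin n))

lemma mc_eq (i : Fin n) :
    {p : Fin n | p < i ∧ (f (σ p)).a < 0}.ncard = mc f σ i := by
  have h1 := countP_take_ofFn (fun t : Fin n => σ t) (fun x => (f x).a < 0) i.val i.isLt.le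
  have h5 : {p : Fin n | p < i ∧ (f (σ p)).a < 0}
      = ↑(Finset.univ.filter (fun t : Fin n => t.val < i.val ∧ (f (σ t)).a < 0)) := by
    ext t
    simp only [Set.mem_setOf_eq, Finset.coe_filter, Finset.mem_univ, true_and, Fin.lt_def]
  rw [h5, Set.ncard_coe_finset]
  exact h1.symm

lemma kc_eq : {j : Fin n | (f j).a < 0}.ncard = kc f σ := by
  have h1 := countP_take_ofFn (fun t : Fin n => σ t) (fun x => (f x).a < 0) n le_rfl
  have h2 : (List.ofFn (fun t : Fin n => σ t)).take n = List.ofFn (fun t : Fin n => σ t) :=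
    List.take_of_length_le (by simp)
  rw [h2] at h1
  have h3 : (Finset.univ.filter (fun t : Fin n => t.val < n ∧ (f (σ t)).a < 0))
      = (Finset.univ.filter (fun t : Fin n => (f (σ t)).a < 0)) := by
    apply Finset.filter_congr
    intro t _
    simp [t.isLt]
  have h4 : (Finset.univ.filter (fun t : Fin n => (f (σ t)).a < 0)).card
      = (Finset.univ.filter (fun j : Fin n => (f j).a < 0)).card := by
    apply Finset.card_bij' (fun a _ => σ a) (fun b _ => σ.symm b)
    · intro a ha
      simp only [Finset.mem_filter, Finset.mem_univ, true_and] at ha ⊢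
      exact ha
    · intro b hb
      simp only [Finset.mem_filter, Finset.mem_univ, true_and] at hb ⊢
      simpa using hb
    · intro a _; simp
    · intro b _; simp
  have h5 : {j : Fin n | (f j).a < 0}
      = ↑(Finset.univ.filter (fun j : Fin n => (f j).a < 0)) := by
    ext t; simp
  rw [h5, Set.ncard_coe_finset, ← h4, ← h3]
  exact h1.symm

end Bridge
end S18

/-- angle separation of `L^σ` and `U^σ` for an optimal permutation.
A nondecreasing position `i` (i.e. `0 < α(f_{σ(i)})`, since there are no constants)
belongs to `I^σ_j` where `j` is the number of decreasing positions before `i`; it lies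
in `L^σ` iff `k - j` is even, where `k` is the total number of decreasing functions. -/
theorem stmt18 {n : ℕ} (f : Fin n → LinFun)
    (hnconst : ∀ i, (f i).a ≠ 0) (hnid : ∀ i, ¬ (f i).IsId)
    (hdec : ∃ i, (f i).a < 0)
    (σ : Equiv.Perm (Fin n)) (hopt : IsMinimum f σ) :
    ∃ ψ1 ψ2 : ℝ, ψ1 ∈ Set.Ioo 0 Real.pi ∧ ψ2 ∈ Set.Ioo Real.pi (2 * Real.pi) ∧
      (∀ i : Fin n, 0 < (f (σ i)).a →
        Even ({j : Fin n | (f j).a < 0}.ncard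
              - {p : Fin n | p < i ∧ (f (σ p)).a < 0}.ncard) →
        (f (σ i)).theta ∈ Set.Icc ψ1 ψ2) ∧
      (∀ i : Fin n, 0 < (f (σ i)).a →
        ¬ Even ({j : Fin n | (f j).a < 0}.ncard
              - {p : Fin n | p < i ∧ (f (σ p)).a < 0}.ncard) →
        (f (σ i)).theta ∈ Icc2pi ψ2 ψ1) := by
    classical
  open S18 in
  have hk := S18.kc_eq f σ
  have hmEq : ∀ i : Fin n, {p : Fin n | p < i ∧ (f (σ p)).a < 0}.ncard = S18.mc f σ i :=
    S18.mc_eq f σ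
  have hEconv : ∀ i : Fin n,
      ({j : Fin n | (f j).a < 0}.ncard - {p : Fin n | p < i ∧ (f (σ p)).a < 0}.ncard)
        = S18.kc f σ - S18.mc f σ i := by
    intro i
    rw [hk, hmEq i]
  set π := Real.pi with hπ
  set A : Finset ℝ := (Finset.univ.filter
      (fun i : Fin n => 0 < (f (σ i)).a ∧ Even (S18.kc f σ - S18.mc f σ i))).image
      (fun i => (f (σ i)).theta) with hA
  set B1 : Finset ℝ := (Finset.univ.filter
      (fun i : Fin n => 0 < (f (σ i)).a ∧ ¬ Even (S18.kc f σ - S18.mc f σ i)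
        ∧ (f (σ i)).theta < π)).image (fun i => (f (σ i)).theta) with hB1
  set B2 : Finset ℝ := (Finset.univ.filter
      (fun i : Fin n => 0 < (f (σ i)).a ∧ ¬ Even (S18.kc f σ - S18.mc f σ i)
        ∧ π < (f (σ i)).theta)).image (fun i => (f (σ i)).theta) with hB2
  have hpiA : π ∈ insert π A := Finset.mem_insert_self _ _
  have h0B1 : (0:ℝ) ∈ insert (0:ℝ) B1 := Finset.mem_insert_self _ _
  have h2B2 : (2*π) ∈ insert (2*π) B2 := Finset.mem_insert_self _ _
  have hAfact : ∀ x ∈ insert π A, 0 < x ∧ x < 2*π := by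
    intro x hx
    rcases Finset.mem_insert.mp hx with rfl | hx
    · exact ⟨Real.pi_pos, by linarith [Real.pi_pos]⟩
    · obtain ⟨i, hi, rfl⟩ := Finset.mem_image.mp hx
      obtain ⟨hpi, hEi⟩ := (Finset.mem_filter.mp hi).2
      exact ⟨lt_of_le_of_ne (S18.theta_nonneg _)
          (Ne.symm (S18.CL0 f σ hopt hnconst hnid hdec i hpi hEi)),
        S18.theta_lt_two_pi _⟩
  have hB1lt : ∀ x ∈ insert (0:ℝ) B1, x < π := by
    intro x hx
    rcases Finset.mem_insert.mp hx with rfl | hx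
    · exact Real.pi_pos
    · obtain ⟨j, hj, rfl⟩ := Finset.mem_image.mp hx
      exact (Finset.mem_filter.mp hj).2.2.2
  have hB1le : ∀ x ∈ insert (0:ℝ) B1, ∀ i : Fin n, 0 < (f (σ i)).a →
      Even (S18.kc f σ - S18.mc f σ i) → x ≤ (f (σ i)).theta := by
    intro x hx i hpi hEi
    rcases Finset.mem_insert.mp hx with rfl | hx
    · exact S18.theta_nonneg _
    · obtain ⟨j, hj, rfl⟩ := Finset.mem_image.mp hx
      obtain ⟨hpj, hEj, hjlt⟩ := (Finset.mem_filter.mp hj).2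
      rcases eq_or_lt_of_le (S18.theta_nonneg (f (σ j))) with h0 | h0
      · rw [← h0]
        exact S18.theta_nonneg _
      · exact S18.CL2 f σ hopt hnconst hnid hdec i j hpi hEi hpj hEj ⟨h0, hjlt⟩
  have hB2gt : ∀ x ∈ insert (2*π) B2, π < x := by
    intro x hx
    rcases Finset.mem_insert.mp hx with rfl | hx
    · linarith [Real.pi_pos]
    · obtain ⟨j, hj, rfl⟩ := Finset.mem_image.mp hx
      exact (Finset.mem_filter.mp hj).2.2.2
  have hB2ge : ∀ x ∈ insert (2*π) B2, ∀ i : Fin n, 0 < (f (σ i)).a →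
      Even (S18.kc f σ - S18.mc f σ i) → (f (σ i)).theta ≤ x := by
    intro x hx i hpi hEi
    rcases Finset.mem_insert.mp hx with rfl | hx
    · exact (S18.theta_lt_two_pi _).le
    · obtain ⟨j, hj, rfl⟩ := Finset.mem_image.mp hx
      obtain ⟨hpj, hEj, hjgt⟩ := (Finset.mem_filter.mp hj).2
      exact S18.CL3 f σ hopt hnconst hnid i j hpi hEi hpj hEj
        ⟨hjgt, S18.theta_lt_two_pi _⟩
  set m1 : ℝ := (insert π A).min' ⟨π, hpiA⟩ with hm1
  set M2 : ℝ := (insert π A).max' ⟨π, hpiA⟩ with hM2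
  set b1 : ℝ := (insert (0:ℝ) B1).max' ⟨0, h0B1⟩ with hb1
  set b2 : ℝ := (insert (2*π) B2).min' ⟨2*π, h2B2⟩ with hb2
  have hm1pos : 0 < m1 := (hAfact _ (Finset.min'_mem _ _)).1
  have hm1le : m1 ≤ π := Finset.min'_le _ _ hpiA
  have hb1lt : b1 < π := hB1lt _ (Finset.max'_mem _ _)
  have hM2lt : M2 < 2*π := (hAfact _ (Finset.max'_mem _ _)).2
  have hM2ge : π ≤ M2 := Finset.le_max' _ _ hpiA
  have hb2gt : π < b2 := hB2gt _ (Finset.min'_mem _ _)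
  have hb2le : b2 ≤ 2*π := Finset.min'_le _ _ h2B2
  set ψ1 : ℝ := max b1 (m1/2) with hψ1
  set ψ2 : ℝ := min b2 ((M2 + 2*π)/2) with hψ2
  have hψ1pos : 0 < ψ1 := lt_of_lt_of_le (by linarith) (le_max_right _ _)
  have hψ1lt : ψ1 < π := max_lt hb1lt (by linarith)
  have hψ2gt : π < ψ2 := lt_min hb2gt (by linarith)
  have hψ2lt : ψ2 < 2*π := lt_of_le_of_lt (min_le_right _ _) (by linarith)
  refine ⟨ψ1, ψ2, ⟨hψ1pos, hψ1lt⟩, ⟨hψ2gt, hψ2lt⟩, ?_, ?_⟩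
  · intro i hpos hEset
    rw [hEconv i] at hEset
    have hmemA : (f (σ i)).theta ∈ insert π A :=
      Finset.mem_insert_of_mem (Finset.mem_image.mpr
        ⟨i, Finset.mem_filter.mpr ⟨Finset.mem_univ _, hpos, hEset⟩, rfl⟩)
    constructor
    · apply max_le
      · exact Finset.max'_le _ _ _ (fun y hy => hB1le y hy i hpos hEset)
      · have := Finset.min'_le _ _ hmemA
        rw [← hm1] at this
        linarith
    · apply le_min
      · exact Finset.le_min' _ _ _ (fun y hy => hB2ge y hy i hpos hEset)
      · have := Finset.le_max' _ _ hmemA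
        rw [← hM2] at this
        linarith
  · intro i hpos hEset
    rw [hEconv i] at hEset
    rcases lt_trichotomy ((f (σ i)).theta) π with hlt | heq | hgt
    · have hmem : (f (σ i)).theta ∈ insert (0:ℝ) B1 :=
        Finset.mem_insert_of_mem (Finset.mem_image.mpr
          ⟨i, Finset.mem_filter.mpr ⟨Finset.mem_univ _, hpos, hEset, hlt⟩, rfl⟩)
      have hle : (f (σ i)).theta ≤ ψ1 :=
        le_trans (Finset.le_max' _ _ hmem) (le_max_left _ _)
      refine ⟨ψ2 - 2*π, ψ1, ⟨-1, by push_cast; ring⟩, ⟨0, by push_cast; ring⟩,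
        by linarith, by linarith, ?_, ?_⟩
      · linarith [S18.theta_nonneg (f (σ i))]
      · exact hle
    · exact absurd heq (S18.CL1 f σ hopt hnconst i hpos hEset)
    · have hmem : (f (σ i)).theta ∈ insert (2*π) B2 :=
        Finset.mem_insert_of_mem (Finset.mem_image.mpr
          ⟨i, Finset.mem_filter.mpr ⟨Finset.mem_univ _, hpos, hEset, hgt⟩, rfl⟩)
      have hge : ψ2 ≤ (f (σ i)).theta :=
        le_trans (min_le_left _ _) (Finset.min'_le _ _ hmem)
      refine ⟨ψ2, ψ1 + 2*π, ⟨0, by push_cast; ring⟩, ⟨1, by push_cast; ring⟩,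
        by linarith, by linarith, ?_, ?_⟩
      · exact hge
      · linarith [S18.theta_lt_two_pi (f (σ i))]
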